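/- (Diaconis' formula) Let λ = (λ_1,…,λ_k) ⊢ n with conjugate partition λ', let μ ⊢ n-1 with λ → μ, suppose the removed box λ\μ lies in row i and column j, and fix a λ-tableau t with 1 in the box λ\μ. Then the generalized character evaluated at the transposition (12) is φ_{λ,μ}((12)) = (λ_i - λ'_j)/(n-1), where φ_{λ,μ} = (1/(n-1)!) Σ_{π∈S̃_{n-1}} π E_t π^{-1}. -/

import Mathlib

open scoped Classical

/-- `γ` belongs to the column stabilizer `C_t` of the tableau `t : Fin n ≃ lam.cells`
(the entries `1,…,n` are encoded as `0,…,n-1 : Fin n`; a cell `(i, j)` lies in row `i` and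
column `j`). -/
def InColStab {n : ℕ} (lam : YoungDiagram) (t : Fin n ≃ lam.cells)
    (γ : Equiv.Perm (Fin n)) : Prop :=
  ∀ m : Fin n, ((t (γ m)) : ℕ × ℕ).2 = ((t m) : ℕ × ℕ).2

/-- `σ` belongs to the row stabilizer `R_t` of the tableau `t : Fin n ≃ lam.cells`. -/
def InRowStab {n : ℕ} (lam : YoungDiagram) (t : Fin n ≃ lam.cells)
    (σ : Equiv.Perm (Fin n)) : Prop :=
  ∀ m : Fin n, ((t (σ m)) : ℕ × ℕ).1 = ((t m) : ℕ × ℕ).1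

open scoped Classical in
/-- The Young symmetrizer `E_t = ∑_{γ ∈ C_t} ∑_{σ ∈ R_t} sign(γ) γσ ∈ ℂ[S_n]`. -/
noncomputable def youngSym {n : ℕ} (lam : YoungDiagram) (t : Fin n ≃ lam.cells) :
    MonoidAlgebra ℂ (Equiv.Perm (Fin n)) :=
  ∑ γ : Equiv.Perm (Fin n), ∑ σ : Equiv.Perm (Fin n),
    if InColStab lam t γ ∧ InRowStab lam t σ then
      MonoidAlgebra.single (γ * σ) ((Equiv.Perm.sign γ : ℤ) : ℂ)
    else 0

open scoped Classical in
/-- The generalized character `φ_{λ,μ} = (1/(n-1)!) ∑_{π ∈ S̃_{n-1}} π E_t π⁻¹ ∈ ℂ[S_n]`, where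
`S̃_{n-1}` is the stabilizer of the point `1` (encoded as `0 : Fin n`), viewed as an element of
the group algebra, i.e. as a function on `S_n`. -/
noncomputable def genChar {n : ℕ} (lam : YoungDiagram) (t : Fin n ≃ lam.cells) :
    MonoidAlgebra ℂ (Equiv.Perm (Fin n)) :=
  ((n - 1).factorial : ℂ)⁻¹ •
    ∑ π : Equiv.Perm (Fin n),
      if ∀ i : Fin n, (i : ℕ) = 0 → π i = i then
        MonoidAlgebra.of ℂ (Equiv.Perm (Fin n)) π * youngSym lam t *
          MonoidAlgebra.of ℂ (Equiv.Perm (Fin n)) π⁻¹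
      else 0

namespace DiaconisAux

open Finset Equiv

variable {n : ℕ} (lam : YoungDiagram) (t : Fin n ≃ lam.cells)

lemma inColStab_one : InColStab lam t 1 := fun _ => rfl

lemma inRowStab_one : InRowStab lam t 1 := fun _ => rfl

lemma inRowStab_swap_iff {z m : Fin n} :
    InRowStab lam t (Equiv.swap z m) ↔ ((t m : ℕ × ℕ)).1 = ((t z : ℕ × ℕ)).1 := by
  constructor
  · intro h
    have := h z
    rwa [Equiv.swap_apply_left] at this
  · intro h x
    rcases eq_or_ne x z with rfl | hxz
    · rwa [Equiv.swap_apply_left]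
    rcases eq_or_ne x m with rfl | hxm
    · rw [Equiv.swap_apply_right]; exact h.symm
    · rw [Equiv.swap_apply_of_ne_of_ne hxz hxm]

lemma inColStab_swap_iff {z m : Fin n} :
    InColStab lam t (Equiv.swap z m) ↔ ((t m : ℕ × ℕ)).2 = ((t z : ℕ × ℕ)).2 := by
  constructor
  · intro h
    have := h z
    rwa [Equiv.swap_apply_left] at this
  · intro h x
    rcases eq_or_ne x z with rfl | hxz
    · rwa [Equiv.swap_apply_left]
    rcases eq_or_ne x m with rfl | hxm
    · rw [Equiv.swap_apply_right]; exact h.symm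
    · rw [Equiv.swap_apply_of_ne_of_ne hxz hxm]

lemma decomp {γ σ : Equiv.Perm (Fin n)} {z m : Fin n} (hzm : z ≠ m)
    (hγ : InColStab lam t γ) (hσ : InRowStab lam t σ)
    (h : γ * σ = Equiv.swap z m) :
    (γ = 1 ∧ σ = Equiv.swap z m) ∨ (γ = Equiv.swap z m ∧ σ = 1) := by
  have key : ∀ x : Fin n, x ≠ z → x ≠ m → σ x = x := by
    intro x hxz hxm
    have h1 : γ (σ x) = x := by
      have h1' : (γ * σ) x = Equiv.swap z m x := by rw [h]
      rwa [Equiv.Perm.mul_apply, Equiv.swap_apply_of_ne_of_ne hxz hxm] at h1' 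
    have hσx : σ x = γ⁻¹ x := Equiv.Perm.eq_inv_iff_eq.mpr h1
    have hcol : ((t (σ x)) : ℕ × ℕ).2 = ((t x) : ℕ × ℕ).2 := by
      have h2 := hγ (γ⁻¹ x)
      rw [show γ (γ⁻¹ x) = x from γ.apply_symm_apply x] at h2
      rw [hσx, h2]
    have hrow : ((t (σ x)) : ℕ × ℕ).1 = ((t x) : ℕ × ℕ).1 := hσ x
    have : t (σ x) = t x := Subtype.ext (Prod.ext hrow hcol)
    exact t.injective this
  have memz : σ z = z ∨ σ z = m := by
    by_contra hc
    push_neg at hc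
    have hy : σ (σ z) = σ z := key (σ z) hc.1 hc.2
    exact hc.1 (σ.injective (by rw [hy] : σ z = σ (σ z))).symm
  have memm : σ m = z ∨ σ m = m := by
    by_contra hc
    push_neg at hc
    have hy : σ (σ m) = σ m := key (σ m) hc.1 hc.2
    exact hc.2 (σ.injective (by rw [hy] : σ m = σ (σ m))).symm
  rcases memz with h1 | h1
  · -- σ z = z; then σ m = m, σ = 1, γ = swap z m
    have h2 : σ m = m := by
      rcases memm with h2 | h2
      · exact absurd (σ.injective (h1.trans h2.symm)) hzm
      · exact h2
    have hσ1 : σ = 1 := by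
      apply Equiv.ext
      intro x
      rcases eq_or_ne x z with rfl | hxz
      · rw [Equiv.Perm.one_apply]; exact h1
      rcases eq_or_ne x m with rfl | hxm
      · rw [Equiv.Perm.one_apply]; exact h2
      · rw [Equiv.Perm.one_apply]; exact key x hxz hxm
    right
    refine ⟨?_, hσ1⟩
    rw [hσ1, mul_one] at h
    exact h
  · -- σ z = m
    have h2 : σ m = z := by
      rcases memm with h2 | h2
      · exact h2
      · exact absurd (σ.injective (h2.trans h1.symm)) hzm.symm
    have hσs : σ = Equiv.swap z m := by
      apply Equiv.ext
      intro x
      rcases eq_or_ne x z with rfl | hxz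
      · rw [Equiv.swap_apply_left]; exact h1
      rcases eq_or_ne x m with rfl | hxm
      · rw [Equiv.swap_apply_right]; exact h2
      · rw [Equiv.swap_apply_of_ne_of_ne hxz hxm]; exact key x hxz hxm
    left
    refine ⟨?_, hσs⟩
    rw [hσs] at h
    exact mul_right_cancel (h.trans (one_mul (Equiv.swap z m)).symm)

lemma youngSym_swap_apply {z m : Fin n} (hzm : z ≠ m) :
    (youngSym lam t).coeff (Equiv.swap z m) =
      (if ((t m : ℕ × ℕ)).1 = ((t z : ℕ × ℕ)).1 then (1 : ℂ) else 0) -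
      (if ((t m : ℕ × ℕ)).2 = ((t z : ℕ × ℕ)).2 then (1 : ℂ) else 0) := by
  classical
  have hs1 : Equiv.swap z m ≠ 1 := fun hcon => hzm (Equiv.swap_eq_one_iff.mp hcon)
  have expand : (youngSym lam t).coeff (Equiv.swap z m)
      = ∑ p : Equiv.Perm (Fin n) × Equiv.Perm (Fin n),
          (if (InColStab lam t p.1 ∧ InRowStab lam t p.2) ∧ p.1 * p.2 = Equiv.swap z m
           then ((Equiv.Perm.sign p.1 : ℤ) : ℂ) else 0) := by
    rw [youngSym, ← Finset.sum_product', MonoidAlgebra.coeff_sum, Finset.sum_apply', Finset.univ_product_univ]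
    refine Finset.sum_congr rfl fun p _ => ?_
    by_cases hP : InColStab lam t p.1 ∧ InRowStab lam t p.2
    · simp [hP, MonoidAlgebra.coeff_single, Finsupp.single_apply]
    · simp [hP]
  rw [expand]
  have hne : ((1 : Equiv.Perm (Fin n)), Equiv.swap z m) ≠ (Equiv.swap z m, 1) := by
    intro hcon
    exact hs1 (congrArg Prod.fst hcon).symm
  rw [← Finset.sum_subset
      (Finset.subset_univ ({((1 : Equiv.Perm (Fin n)), Equiv.swap z m),
        (Equiv.swap z m, (1 : Equiv.Perm (Fin n)))} : Finset _))
      (fun p _ hp => ?_)]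
  · rw [Finset.sum_pair hne]
    have e1 : (if (InColStab lam t (1 : Equiv.Perm (Fin n)) ∧ InRowStab lam t (Equiv.swap z m)) ∧
          (1 : Equiv.Perm (Fin n)) * Equiv.swap z m = Equiv.swap z m
        then ((Equiv.Perm.sign (1 : Equiv.Perm (Fin n)) : ℤ) : ℂ) else 0)
        = (if ((t m : ℕ × ℕ)).1 = ((t z : ℕ × ℕ)).1 then (1 : ℂ) else 0) := by
      by_cases hr : ((t m : ℕ × ℕ)).1 = ((t z : ℕ × ℕ)).1
      · rw [if_pos ⟨⟨inColStab_one lam t, (inRowStab_swap_iff lam t).mpr hr⟩, one_mul _⟩, if_pos hr]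
        simp
      · rw [if_neg, if_neg hr]
        intro hcon
        exact hr ((inRowStab_swap_iff lam t).mp hcon.1.2)
    have e2 : (if (InColStab lam t (Equiv.swap z m) ∧ InRowStab lam t (1 : Equiv.Perm (Fin n))) ∧
          Equiv.swap z m * (1 : Equiv.Perm (Fin n)) = Equiv.swap z m
        then ((Equiv.Perm.sign (Equiv.swap z m) : ℤ) : ℂ) else 0)
        = -(if ((t m : ℕ × ℕ)).2 = ((t z : ℕ × ℕ)).2 then (1 : ℂ) else 0) := by
      by_cases hk : ((t m : ℕ × ℕ)).2 = ((t z : ℕ × ℕ)).2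
      · rw [if_pos ⟨⟨(inColStab_swap_iff lam t).mpr hk, inRowStab_one lam t⟩, mul_one _⟩, if_pos hk]
        rw [Equiv.Perm.sign_swap hzm]
        norm_num
      · rw [if_neg, if_neg hk, neg_zero]
        intro hcon
        exact hk ((inColStab_swap_iff lam t).mp hcon.1.1)
    rw [e1, e2]
    ring
  · -- vanishing off the two distinguished pairs
    split_ifs with hcond
    · exfalso
      obtain ⟨⟨hc, hr⟩, hmul⟩ := hcond
      rcases decomp lam t hzm hc hr hmul with ⟨hg, hs⟩ | ⟨hg, hs⟩
      · exact hp (by simp [Prod.ext_iff, hg, hs])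
      · exact hp (by simp [Prod.ext_iff, hg, hs])
    · rfl

lemma card_fix_two {z o : Fin n} (hzo : o ≠ z) :
    (Finset.univ.filter fun π : Equiv.Perm (Fin n) => π z = z ∧ π o = o).card
      = (n - 2).factorial := by
  classical
  rw [← Fintype.card_subtype]
  have e1 : {π : Equiv.Perm (Fin n) // π z = z ∧ π o = o} ≃
      {f : Equiv.Perm (Fin n) // ∀ a, ¬(a ≠ z ∧ a ≠ o) → f a = a} := by
    apply Equiv.subtypeEquivRight
    intro π
    constructor
    · rintro ⟨h1, h2⟩ a ha
      push_neg at ha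
      by_cases haz : a = z
      · rw [haz]; exact h1
      · rw [ha haz]; exact h2
    · intro h
      exact ⟨h z (by simp), h o (by simp)⟩
  rw [Fintype.card_congr e1,
    Fintype.card_congr (Equiv.Perm.subtypeEquivSubtypePerm (fun a : Fin n => a ≠ z ∧ a ≠ o)).symm,
    Fintype.card_perm]
  congr 1
  rw [Fintype.card_subtype]
  have hset : (Finset.univ.filter fun a : Fin n => a ≠ z ∧ a ≠ o)
      = Finset.univ \ {z, o} := by
    ext a
    simp [not_or]
  rw [hset, Finset.card_sdiff_of_subset (Finset.subset_univ _), Finset.card_univ, Fintype.card_fin,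
    Finset.card_insert_of_notMem (by simpa using hzo.symm), Finset.card_singleton]

lemma card_fix_map {z o m : Fin n} (hzo : o ≠ z) (hmz : m ≠ z) :
    (Finset.univ.filter fun π : Equiv.Perm (Fin n) => π z = z ∧ π o = m).card
      = (n - 2).factorial := by
  classical
  rw [← card_fix_two hzo]
  apply Finset.card_nbij' (fun π => Equiv.swap o m * π) (fun π => Equiv.swap o m * π)
  · intro π hπ
    rw [Finset.mem_coe, Finset.mem_filter] at hπ ⊢
    obtain ⟨-, h1, h2⟩ := hπ
    refine ⟨Finset.mem_univ _, ?_, ?_⟩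
    · rw [Equiv.Perm.mul_apply, h1, Equiv.swap_apply_of_ne_of_ne hzo.symm hmz.symm]
    · rw [Equiv.Perm.mul_apply, h2, Equiv.swap_apply_right]
  · intro π hπ
    rw [Finset.mem_coe, Finset.mem_filter] at hπ ⊢
    obtain ⟨-, h1, h2⟩ := hπ
    refine ⟨Finset.mem_univ _, ?_, ?_⟩
    · rw [Equiv.Perm.mul_apply, h1, Equiv.swap_apply_of_ne_of_ne hzo.symm hmz.symm]
    · rw [Equiv.Perm.mul_apply, h2, Equiv.swap_apply_left]
  · intro π _
    simp [← mul_assoc, Equiv.swap_mul_self]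
  · intro π _
    simp [← mul_assoc, Equiv.swap_mul_self]

lemma card_row_fin (i : ℕ) :
    (Finset.univ.filter fun m : Fin n => ((t m : ℕ × ℕ)).1 = i).card = lam.rowLen i := by
  classical
  rw [YoungDiagram.rowLen_eq_card]
  apply Finset.card_nbij (fun m => ((t m : ℕ × ℕ)))
  · intro a ha
    rw [Finset.mem_coe, Finset.mem_filter] at ha
    rw [Finset.mem_coe, YoungDiagram.mem_row_iff]
    exact ⟨(YoungDiagram.mem_cells _).mp (t a).2, ha.2⟩
  · intro a ha b hb hab
    exact t.injective (Subtype.ext hab)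
  · intro c hc
    rw [Finset.mem_coe, YoungDiagram.mem_row_iff] at hc
    refine ⟨t.symm ⟨c, (YoungDiagram.mem_cells _).mpr hc.1⟩, ?_, ?_⟩
    · rw [Finset.mem_coe, Finset.mem_filter]
      refine ⟨Finset.mem_univ _, ?_⟩
      rw [Equiv.apply_symm_apply]
      exact hc.2
    · simp

lemma card_col_fin (j : ℕ) :
    (Finset.univ.filter fun m : Fin n => ((t m : ℕ × ℕ)).2 = j).card = lam.colLen j := by
  classical
  rw [YoungDiagram.colLen_eq_card]
  apply Finset.card_nbij (fun m => ((t m : ℕ × ℕ)))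
  · intro a ha
    rw [Finset.mem_coe, Finset.mem_filter] at ha
    rw [Finset.mem_coe, YoungDiagram.mem_col_iff]
    exact ⟨(YoungDiagram.mem_cells _).mp (t a).2, ha.2⟩
  · intro a ha b hb hab
    exact t.injective (Subtype.ext hab)
  · intro c hc
    rw [Finset.mem_coe, YoungDiagram.mem_col_iff] at hc
    refine ⟨t.symm ⟨c, (YoungDiagram.mem_cells _).mpr hc.1⟩, ?_, ?_⟩
    · rw [Finset.mem_coe, Finset.mem_filter]
      refine ⟨Finset.mem_univ _, ?_⟩
      rw [Equiv.apply_symm_apply]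
      exact hc.2
    · simp

end DiaconisAux

/-- **Diaconis' formula.** Let `λ = (λ_1,…,λ_k) ⊢ n` with conjugate partition
`λ'`, let `μ ⊢ n-1` with `λ → μ`, suppose the removed box `λ∖μ` lies in row `i` and column `j`
(0-indexed, so that `λ_i` of the paper is `rowLen i` and `λ'_j` is `colLen j`), and fix a
`λ`-tableau `t` with `1` in the box `λ∖μ`.  Then the generalized character evaluated at the
transposition `(12)` is `φ_{λ,μ}((12)) = (λ_i - λ'_j)/(n-1)`, where
`φ_{λ,μ} = (1/(n-1)!) ∑_{π ∈ S̃_{n-1}} π E_t π⁻¹`. -/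
theorem genChar_transposition_diaconis
    {n : ℕ} (hn : 2 ≤ n) (lam mu : YoungDiagram)
    (hlam : lam.card = n) (hmu : mu.card = n - 1) (hsub : mu ≤ lam)
    (box : lam.cells) (hbox : (box : ℕ × ℕ) ∉ mu)
    (i j : ℕ) (hij : (box : ℕ × ℕ) = (i, j))
    (t : Fin n ≃ lam.cells) (ht : ∀ a : Fin n, (a : ℕ) = 0 → t a = box) :
    (genChar lam t).coeff (Equiv.swap (⟨0, by omega⟩ : Fin n) ⟨1, by omega⟩) =
      ((lam.rowLen i : ℂ) - (lam.colLen j : ℂ)) / ((n : ℂ) - 1) := by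
  classical
  set z : Fin n := ⟨0, by omega⟩ with hz
  set o : Fin n := ⟨1, by omega⟩ with ho
  have hoz : o ≠ z := by
    simp [hz, ho, Fin.ext_iff]
  set τ : Equiv.Perm (Fin n) := Equiv.swap z o with hτ
  -- coordinates of the box
  have htz : (t z : ℕ × ℕ) = (i, j) := by rw [ht z rfl, hij]
  have htz1 : ((t z : ℕ × ℕ)).1 = i := by rw [htz]
  have htz2 : ((t z : ℕ × ℕ)).2 = j := by rw [htz]
  -- the stabilizer condition is just fixing z
  have hcond : ∀ π : Equiv.Perm (Fin n),
      (∀ a : Fin n, (a : ℕ) = 0 → π a = a) ↔ π z = z := by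
    intro π
    constructor
    · intro h; exact h z rfl
    · intro h a ha
      have : a = z := Fin.ext ha
      rw [this]; exact h
  -- compute the coefficient
  rw [genChar, MonoidAlgebra.coeff_smul_apply, MonoidAlgebra.coeff_sum, Finset.sum_apply']
  have step1 : ∀ π : Equiv.Perm (Fin n),
      (if ∀ a : Fin n, (a : ℕ) = 0 → π a = a then
          MonoidAlgebra.of ℂ (Equiv.Perm (Fin n)) π * youngSym lam t *
            MonoidAlgebra.of ℂ (Equiv.Perm (Fin n)) π⁻¹
        else 0).coeff τ
      = (if π z = z then (youngSym lam t).coeff (Equiv.swap z (π⁻¹ o)) else 0) := by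
    intro π
    by_cases hπ : π z = z
    · rw [if_pos ((hcond π).mpr hπ), if_pos hπ]
      rw [MonoidAlgebra.of_apply, MonoidAlgebra.of_apply,
        MonoidAlgebra.coeff_mul_single_apply, MonoidAlgebra.coeff_single_mul_apply]
      rw [one_mul, mul_one, inv_inv]
      congr 1
      have hπinv : π⁻¹ z = z := Equiv.Perm.inv_eq_iff_eq.mpr hπ.symm
      have h2 : Equiv.swap (π⁻¹ z) (π⁻¹ o) = π⁻¹ * Equiv.swap z o * π⁻¹⁻¹ :=
        Equiv.swap_apply_apply π⁻¹ z o
      rw [inv_inv, hπinv, mul_assoc] at h2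
      rw [hτ]
      exact h2.symm
    · rw [if_neg (fun hcon => hπ ((hcond π).mp hcon)), if_neg hπ]
      rfl
  rw [Finset.sum_congr rfl (fun π _ => step1 π)]
  -- reindex π ↦ π⁻¹
  have step2 : ∑ π : Equiv.Perm (Fin n),
        (if π z = z then (youngSym lam t).coeff (Equiv.swap z (π⁻¹ o)) else 0)
      = ∑ π : Equiv.Perm (Fin n),
        (if π z = z then (youngSym lam t).coeff (Equiv.swap z (π o)) else 0) := by
    rw [← Equiv.sum_comp (Equiv.inv (Equiv.Perm (Fin n)))
      (fun π => if π z = z then (youngSym lam t).coeff (Equiv.swap z (π⁻¹ o)) else 0)]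
    refine Finset.sum_congr rfl fun π _ => ?_
    show (if π⁻¹ z = z then (youngSym lam t).coeff (Equiv.swap z (π⁻¹⁻¹ o)) else 0) = _
    by_cases hπ : π z = z
    · have hinv : π⁻¹ z = z := Equiv.Perm.inv_eq_iff_eq.mpr hπ.symm
      rw [if_pos hinv, if_pos hπ, inv_inv]
    · have hinv : ¬ π⁻¹ z = z := fun hcon => hπ (Equiv.Perm.inv_eq_iff_eq.mp hcon).symm
      rw [if_neg hinv, if_neg hπ]
  rw [step2]
  -- fiber the sum over the value π o
  have step3 : ∑ π : Equiv.Perm (Fin n),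
        (if π z = z then (youngSym lam t).coeff (Equiv.swap z (π o)) else 0)
      = ∑ π ∈ Finset.univ.filter (fun π : Equiv.Perm (Fin n) => π z = z),
          (youngSym lam t).coeff (Equiv.swap z (π o)) := by
    rw [Finset.sum_filter]
  rw [step3]
  have step4 : ∑ π ∈ Finset.univ.filter (fun π : Equiv.Perm (Fin n) => π z = z),
        (youngSym lam t).coeff (Equiv.swap z (π o))
      = ∑ m : Fin n,
          ((Finset.univ.filter fun π : Equiv.Perm (Fin n) => π z = z ∧ π o = m).card
            • (youngSym lam t).coeff (Equiv.swap z m)) := by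
    rw [← Finset.sum_fiberwise' _ (fun π : Equiv.Perm (Fin n) => π o)
      (fun m => (youngSym lam t).coeff (Equiv.swap z m))]
    refine Finset.sum_congr rfl fun m _ => ?_
    rw [Finset.sum_const, Finset.filter_filter]
  rw [step4]
  -- split off m = z, whose fiber is empty
  rw [← Finset.sum_erase_add _ _ (Finset.mem_univ z)]
  have hzterm : (Finset.univ.filter fun π : Equiv.Perm (Fin n) => π z = z ∧ π o = z).card = 0 := by
    rw [Finset.card_eq_zero]
    ext π
    simp only [Finset.mem_filter, Finset.mem_univ, true_and, Finset.notMem_empty, iff_false]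
    rintro ⟨h1, h2⟩
    exact hoz (π.injective (h2.trans h1.symm))
  rw [hzterm, zero_smul, add_zero]
  -- evaluate each remaining term
  have step5 : ∀ m ∈ Finset.univ.erase z,
      (Finset.univ.filter fun π : Equiv.Perm (Fin n) => π z = z ∧ π o = m).card
          • (youngSym lam t).coeff (Equiv.swap z m)
        = (n - 2).factorial •
            ((if ((t m : ℕ × ℕ)).1 = i then (1 : ℂ) else 0) -
             (if ((t m : ℕ × ℕ)).2 = j then (1 : ℂ) else 0)) := by
    intro m hm
    have hmz : m ≠ z := Finset.ne_of_mem_erase hm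
    rw [DiaconisAux.card_fix_map hoz hmz,
      DiaconisAux.youngSym_swap_apply lam t (Ne.symm hmz), htz1, htz2]
  rw [Finset.sum_congr rfl step5]
  -- sum the indicators
  have hrowsum : ∑ m ∈ Finset.univ.erase z, (if ((t m : ℕ × ℕ)).1 = i then (1 : ℂ) else 0)
      = ((lam.rowLen i - 1 : ℕ) : ℂ) := by
    rw [Finset.sum_boole]
    congr 1
    rw [Finset.filter_erase, Finset.card_erase_of_mem, DiaconisAux.card_row_fin lam t i]
    rw [Finset.mem_filter]
    exact ⟨Finset.mem_univ _, htz1⟩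
  have hcolsum : ∑ m ∈ Finset.univ.erase z, (if ((t m : ℕ × ℕ)).2 = j then (1 : ℂ) else 0)
      = ((lam.colLen j - 1 : ℕ) : ℂ) := by
    rw [Finset.sum_boole]
    congr 1
    rw [Finset.filter_erase, Finset.card_erase_of_mem, DiaconisAux.card_col_fin lam t j]
    rw [Finset.mem_filter]
    exact ⟨Finset.mem_univ _, htz2⟩
  rw [← Finset.smul_sum, Finset.sum_sub_distrib, hrowsum, hcolsum]
  -- final arithmetic
  have hbox_mem : ((i, j) : ℕ × ℕ) ∈ lam := by
    rw [← hij]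
    exact (YoungDiagram.mem_cells _).mp box.2
  have hrow1 : 1 ≤ lam.rowLen i := by
    have := YoungDiagram.mem_iff_lt_rowLen.mp hbox_mem
    omega
  have hcol1 : 1 ≤ lam.colLen j := by
    have := YoungDiagram.mem_iff_lt_colLen.mp hbox_mem
    omega
  have hfact : ((n - 1).factorial : ℂ) = ((n : ℂ) - 1) * ((n - 2).factorial : ℂ) := by
    have h1 : n - 1 = (n - 2) + 1 := by omega
    rw [h1, Nat.factorial_succ]
    push_cast
    have h2 : ((n - 2 : ℕ) : ℂ) = (n : ℂ) - 2 := by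
      have : ((n - 2 : ℕ) : ℂ) = ((n : ℕ) : ℂ) - 2 := by
        push_cast [Nat.cast_sub (by omega : 2 ≤ n)]
        ring
      exact this
    rw [h2]
    ring
  have hn1 : ((n : ℂ) - 1) ≠ 0 := by
    intro hcon
    have : (n : ℂ) = 1 := by linear_combination hcon
    have : (n : ℕ) = 1 := by exact_mod_cast this
    omega
  have hfne : ((n - 2).factorial : ℂ) ≠ 0 := Nat.cast_ne_zero.mpr (Nat.factorial_ne_zero _)
  rw [nsmul_eq_mul, hfact]
  rw [Nat.cast_sub hrow1, Nat.cast_sub hcol1]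
  push_cast
  field_simp
  have h0 : ((n : ℂ) * ((n - 2).factorial : ℂ) - ((n - 2).factorial : ℂ)) *
      ((n : ℂ) * ((n - 2).factorial : ℂ) - ((n - 2).factorial : ℂ))⁻¹ = 1 := by
    apply mul_inv_cancel₀
    rw [show ((n : ℂ) * ((n - 2).factorial : ℂ) - ((n - 2).factorial : ℂ))
      = ((n : ℂ) - 1) * ((n - 2).factorial : ℂ) by ring]
    exact mul_ne_zero hn1 hfne
  linear_combination ((lam.rowLen i : ℂ) - (lam.colLen j : ℂ)) * h0
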